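/- arXiv:2511.04462 — 5 statements merged into one kernel-verified Lean document; each statement's English description precedes it below -/
import Mathlib

section
/- Let d ≥ 2, n ≥ d+1, p ≥ 2, and let H = (Z_p)^{n+1}/⟨(1,...,1)⟩ with canonical generators φ_1,...,φ_{n+1}. Suppose K ≤ H satisfies: K contains no nontrivial element of the form φ_{i_1}^{l_1}⋯φ_{i_j}^{l_j} with 1 ≤ j ≤ d, 1 ≤ i_1 < ⋯ < i_j ≤ n+1, and l_1,...,l_j ∈ {1,...,p-1}, and H/K ≅ (Z_p)^m. Then m ≥ d. -/
open scoped BigOperators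

/-- Vectors of length `n+1` over `ZMod p`. -/
abbrev GFVec (p n : ℕ) := Fin (n + 1) → ZMod p

/-- The subgroup generated by the constant vector `(1,...,1)`. -/
def diagSub (p n : ℕ) : AddSubgroup (GFVec p n) :=
  AddSubgroup.zmultiples (fun _ => (1 : ZMod p))

/-- The group `H = (Z_p)^{n+1} / ⟨(1,...,1)⟩`. -/
abbrev GFGroup (p n : ℕ) := GFVec p n ⧸ diagSub p n

/-- The canonical generator `φ_i`, the image of the `i`-th standard basis vector. -/
def gen (p n : ℕ) (i : Fin (n + 1)) : GFGroup p n :=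
  QuotientAddGroup.mk (Pi.single i (1 : ZMod p))

/-- An element of `H` is forbidden (acts with fixed points) if it is a nontrivial-looking
product `φ_{i_1}^{l_1} ⋯ φ_{i_j}^{l_j}` with `1 ≤ j ≤ d`, distinct indices and
exponents `l_t ≢ 0 (mod p)`. -/
def IsForbidden (p n d : ℕ) (x : GFGroup p n) : Prop :=
  ∃ (s : Finset (Fin (n + 1))) (l : Fin (n + 1) → ZMod p),
    s.Nonempty ∧ s.card ≤ d ∧ (∀ i ∈ s, l i ≠ 0) ∧
    x = QuotientAddGroup.mk (fun i => if i ∈ s then l i else 0)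

/-- if `K ≤ H` avoids all nontrivial products of at most `d` generator
powers and `H/K ≅ (Z_p)^m`, then `m ≥ d`. -/
theorem stmt_2 (d p n m : ℕ) (hd : 2 ≤ d) (hp : 2 ≤ p) (hn : d + 1 ≤ n)
    (K : AddSubgroup (GFGroup p n))
    (hfree : ∀ x ∈ K, IsForbidden p n d x → x = 0)
    (hquot : Nonempty ((GFGroup p n ⧸ K) ≃+ (Fin m → ZMod p))) :
    d ≤ m := by
  by_contra hlt
  push_neg at hlt
  haveI : NeZero p := ⟨by omega⟩
  obtain ⟨e⟩ := hquot
  -- the composite additive hom (Z_p)^{n+1} → (Z_p)^m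
  set F : GFVec p n →+ (Fin m → ZMod p) :=
    e.toAddMonoidHom.comp ((QuotientAddGroup.mk' K).comp (QuotientAddGroup.mk' (diagSub p n)))
    with hF
  -- extension of a d-vector by zeros
  let ext : (Fin d → ZMod p) → GFVec p n :=
    fun z i => if h : (i : ℕ) < d then z ⟨i, h⟩ else 0
  have hextadd : ∀ x y : Fin d → ZMod p, ext (x - y) = ext x - ext y := by
    intro x y
    funext i
    by_cases h : (i : ℕ) < d <;> simp [ext, h]
  -- cardinality forces non-injectivity
  have hcard : Fintype.card (Fin m → ZMod p) < Fintype.card (Fin d → ZMod p) := by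
    simp only [Fintype.card_fun, Fintype.card_fin, ZMod.card]
    exact Nat.pow_lt_pow_right (by omega) hlt
  obtain ⟨x, y, hxy, hfeq⟩ :=
    Fintype.exists_ne_map_eq_of_card_lt (fun z : Fin d → ZMod p => F (ext z)) hcard
  set z : Fin d → ZMod p := x - y with hz
  have hzne : z ≠ 0 := sub_ne_zero.mpr hxy
  set v : GFVec p n := ext z with hv
  have hFv : F v = 0 := by
    rw [hv, hextadd, map_sub, hfeq, sub_self]
  -- hence the class of v lies in K
  have hmemK : (QuotientAddGroup.mk v : GFGroup p n) ∈ K := by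
    have h0 : (QuotientAddGroup.mk' K) ((QuotientAddGroup.mk' (diagSub p n)) v) = 0 := by
      have h1 := hFv
      simp only [hF, AddMonoidHom.comp_apply, AddEquiv.coe_toAddMonoidHom] at h1
      apply e.injective
      simpa using h1
    simpa [QuotientAddGroup.eq_zero_iff] using h0
  -- v gives a forbidden element
  obtain ⟨j, hj⟩ : ∃ j : Fin d, z j ≠ 0 := by
    by_contra h
    push_neg at h
    exact hzne (funext h)
  have hjn : (j : ℕ) < n + 1 := by have := j.isLt; omega
  set s : Finset (Fin (n + 1)) := Finset.univ.filter (fun i => v i ≠ 0) with hs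
  have hsmem : ∀ i : Fin (n + 1), i ∈ s ↔ v i ≠ 0 := by
    intro i; simp [hs]
  have hvs : ∀ (i : Fin (n + 1)) (h : (i : ℕ) < d), v i = z ⟨(i : ℕ), h⟩ := by
    intro i h
    simp [hv, ext, h]
  have hvz : ∀ i : Fin (n + 1), ¬ (i : ℕ) < d → v i = 0 := by
    intro i hi
    simp [hv, ext, hi]
  have hforb : IsForbidden p n d (QuotientAddGroup.mk v) := by
    refine ⟨s, v, ?_, ?_, ?_, ?_⟩
    · refine ⟨⟨(j : ℕ), hjn⟩, ?_⟩
      rw [hsmem]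
      rw [hvs ⟨(j : ℕ), hjn⟩ (by simpa using j.isLt)]
      simpa using hj
    · have hsub : s ⊆ Finset.univ.filter (fun i : Fin (n + 1) => (i : ℕ) < d) := by
        intro i hi
        rw [hsmem] at hi
        simp only [Finset.mem_filter, Finset.mem_univ, true_and]
        by_contra hc
        exact hi (hvz i hc)
      calc s.card ≤ (Finset.univ.filter (fun i : Fin (n + 1) => (i : ℕ) < d)).card :=
            Finset.card_le_card hsub
        _ ≤ (Finset.range d).card := by
            refine Finset.card_le_card_of_injOn (fun i : Fin (n + 1) => (i : ℕ)) ?_ ?_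
            · intro i hi
              rw [Finset.mem_coe, Finset.mem_filter] at hi
              simpa using hi.2
            · intro a _ b _ hab
              exact Fin.ext hab
        _ = d := Finset.card_range d
    · intro i hi; exact (hsmem i).mp hi
    · congr 1
      funext i
      by_cases hi : i ∈ s
      · simp [hi]
      · rw [if_neg hi]
        rw [hsmem] at hi
        push_neg at hi
        exact hi
  have h0 := hfree _ hmemK hforb
  rw [QuotientAddGroup.eq_zero_iff] at h0
  obtain ⟨k, hk⟩ := h0
  have hdn : d < n + 1 := by omega
  -- evaluate at coordinate d: constant is 0
  have hkd : v ⟨d, hdn⟩ = (k : ZMod p) := by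
    have h2 := congrFun hk ⟨d, hdn⟩
    simpa [zsmul_eq_mul] using h2.symm
  have hk0 : (k : ZMod p) = 0 := by
    rw [← hkd]
    exact hvz _ (by simp)
  have h3 := congrFun hk ⟨(j : ℕ), hjn⟩
  rw [hvs ⟨(j : ℕ), hjn⟩ (by simpa using j.isLt)] at h3
  simp only [Pi.smul_apply, zsmul_eq_mul, mul_one, hk0] at h3
  exact hj (by simpa using h3.symm)
end

section
/- Let H = (Z_2)^7/⟨(1,...,1)⟩ ≅ (Z_2)^6 with canonical generators φ_1,...,φ_7. The subgroup K = ⟨φ_1φ_2φ_4, φ_1φ_3φ_5, φ_2φ_3φ_6⟩ satisfies: (i) H/K ≅ (Z_2)^3; (ii) K contains no nontrivial element of the form φ_k or φ_iφ_j for 1 ≤ i < j ≤ 7. -/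
open scoped BigOperators

set_option maxRecDepth 40000

/-- The subgroup `K = ⟨φ_1φ_2φ_4, φ_1φ_3φ_5, φ_2φ_3φ_6⟩` of `H = (Z_2)^7/⟨(1,…,1)⟩`
(indices 0-based). -/
def K4 : AddSubgroup (GFGroup 2 6) :=
  AddSubgroup.closure
    { gen 2 6 0 + gen 2 6 1 + gen 2 6 3,
      gen 2 6 0 + gen 2 6 2 + gen 2 6 4,
      gen 2 6 1 + gen 2 6 2 + gen 2 6 5 }

/- auxiliary -/

def Fh : GFVec 2 6 →+ (Fin 3 → ZMod 2) :=
  AddMonoidHom.mk'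
    (fun v => ![v 2 + v 4 + v 5 + v 6, v 1 + v 3 + v 5 + v 6, v 0 + v 3 + v 4 + v 6])
    (by
      intro a b
      funext j
      fin_cases j <;>
        simp [Matrix.cons_val_zero, Matrix.cons_val_one, Matrix.head_cons, Pi.add_apply] <;>
        ring)

@[simp] lemma Fh_apply (v : GFVec 2 6) :
    Fh v = ![v 2 + v 4 + v 5 + v 6, v 1 + v 3 + v 5 + v 6, v 0 + v 3 + v 4 + v 6] := rfl

def dd0 : GFVec 2 6 := fun _ => 1
def dd1 : GFVec 2 6 := ![1,1,0,1,0,0,0]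
def dd2 : GFVec 2 6 := ![1,0,1,0,1,0,0]
def dd3 : GFVec 2 6 := ![0,1,1,0,0,1,0]

lemma keyinj : ∀ v : GFVec 2 6,
    v 2 + v 4 + v 5 + v 6 = 0 → v 1 + v 3 + v 5 + v 6 = 0 → v 0 + v 3 + v 4 + v 6 = 0 →
    ∃ a b c d : ZMod 2, v = fun i => a * dd0 i + b * dd1 i + c * dd2 i + d * dd3 i := by
  decide

lemma keyker : ∀ v : GFVec 2 6,
    v 2 + v 4 + v 5 + v 6 = 0 → v 1 + v 3 + v 5 + v 6 = 0 → v 0 + v 3 + v 4 + v 6 = 0 →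
    v = 0 ∨ 3 ≤ (Finset.univ.filter fun i => v i ≠ 0).card := by
  decide

lemma hdiag : ∀ x ∈ diagSub 2 6, Fh x = 0 := by
  intro x hx
  obtain ⟨k, rfl⟩ := AddSubgroup.mem_zmultiples_iff.mp hx
  rw [map_zsmul]
  have : Fh (fun _ => (1 : ZMod 2)) = 0 := by decide
  rw [this, smul_zero]

def Fbar : GFGroup 2 6 →+ (Fin 3 → ZMod 2) :=
  QuotientAddGroup.lift (diagSub 2 6) Fh hdiag

@[simp] lemma Fbar_mk (v : GFVec 2 6) : Fbar (QuotientAddGroup.mk v) = Fh v := rfl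

lemma mk_dd0 : (QuotientAddGroup.mk dd0 : GFGroup 2 6) = 0 := by
  rw [QuotientAddGroup.eq_zero_iff]
  exact AddSubgroup.mem_zmultiples _

lemma mk_dd1 : (QuotientAddGroup.mk dd1 : GFGroup 2 6) = gen 2 6 0 + gen 2 6 1 + gen 2 6 3 := by
  show _ = QuotientAddGroup.mk _ + QuotientAddGroup.mk _ + QuotientAddGroup.mk _
  rw [← QuotientAddGroup.mk_add, ← QuotientAddGroup.mk_add]
  congr 1
  decide

lemma mk_dd2 : (QuotientAddGroup.mk dd2 : GFGroup 2 6) = gen 2 6 0 + gen 2 6 2 + gen 2 6 4 := by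
  show _ = QuotientAddGroup.mk _ + QuotientAddGroup.mk _ + QuotientAddGroup.mk _
  rw [← QuotientAddGroup.mk_add, ← QuotientAddGroup.mk_add]
  congr 1
  decide

lemma mk_dd3 : (QuotientAddGroup.mk dd3 : GFGroup 2 6) = gen 2 6 1 + gen 2 6 2 + gen 2 6 5 := by
  show _ = QuotientAddGroup.mk _ + QuotientAddGroup.mk _ + QuotientAddGroup.mk _
  rw [← QuotientAddGroup.mk_add, ← QuotientAddGroup.mk_add]
  congr 1
  decide

lemma mk_dd1_mem : (QuotientAddGroup.mk dd1 : GFGroup 2 6) ∈ K4 := by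
  rw [mk_dd1]; exact AddSubgroup.subset_closure (Set.mem_insert _ _)

lemma mk_dd2_mem : (QuotientAddGroup.mk dd2 : GFGroup 2 6) ∈ K4 := by
  rw [mk_dd2]
  exact AddSubgroup.subset_closure (Set.mem_insert_of_mem _ (Set.mem_insert _ _))

lemma mk_dd3_mem : (QuotientAddGroup.mk dd3 : GFGroup 2 6) ∈ K4 := by
  rw [mk_dd3]
  exact AddSubgroup.subset_closure (Set.mem_insert_of_mem _ (Set.mem_insert_of_mem _ rfl))

lemma hK4ker : ∀ x ∈ K4, Fbar x = 0 := by
  have h : K4 ≤ Fbar.ker := by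
    rw [K4, AddSubgroup.closure_le]
    rintro y (rfl | rfl | rfl)
    · simp only [SetLike.mem_coe, AddMonoidHom.mem_ker, ← mk_dd1, Fbar_mk]; decide
    · simp only [SetLike.mem_coe, AddMonoidHom.mem_ker, ← mk_dd2, Fbar_mk]; decide
    · simp only [SetLike.mem_coe, AddMonoidHom.mem_ker, ← mk_dd3, Fbar_mk]; decide
  intro x hx; exact h hx

def Gh : (GFGroup 2 6 ⧸ K4) →+ (Fin 3 → ZMod 2) :=
  QuotientAddGroup.lift K4 Fbar hK4ker

lemma Gh_mk_mk (v : GFVec 2 6) :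
    Gh (QuotientAddGroup.mk (QuotientAddGroup.mk v)) = Fh v := rfl

lemma Gh_surj : Function.Surjective Gh := by
  intro w
  refine ⟨QuotientAddGroup.mk (QuotientAddGroup.mk
    (fun i => if i = 0 then w 2 else if i = 1 then w 1 else if i = 2 then w 0 else 0)), ?_⟩
  rw [Gh_mk_mk]
  funext j
  fin_cases j <;> simp

lemma Gh_inj : Function.Injective Gh := by
  rw [injective_iff_map_eq_zero]
  intro x hx
  induction x using QuotientAddGroup.induction_on with | H y => ?_
  induction y using QuotientAddGroup.induction_on with | H v => ?_
  have hF : Fh v = 0 := hx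
  have h0 := congrFun hF 0
  have h1 := congrFun hF 1
  have h2 := congrFun hF 2
  simp only [Fh_apply, Matrix.cons_val_zero, Matrix.cons_val_one, Matrix.head_cons,
    Pi.zero_apply] at h0 h1 h2
  obtain ⟨a, b, c, d, hv⟩ := keyinj v h0 h1 h2
  rw [QuotientAddGroup.eq_zero_iff]
  have key : ∀ (a y : ZMod 2), a.val • y = a * y := by decide
  have hrw : v = a.val • dd0 + b.val • dd1 + c.val • dd2 + d.val • dd3 := by
    rw [hv]; funext i
    simp only [Pi.add_apply, Pi.smul_apply, key]
  have hdd0 : (QuotientAddGroup.mk dd0 : GFGroup 2 6) ∈ K4 := by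
    rw [mk_dd0]; exact zero_mem _
  rw [hrw, QuotientAddGroup.mk_add, QuotientAddGroup.mk_add, QuotientAddGroup.mk_add,
    QuotientAddGroup.mk_nsmul, QuotientAddGroup.mk_nsmul, QuotientAddGroup.mk_nsmul,
    QuotientAddGroup.mk_nsmul]
  exact add_mem (add_mem (add_mem (nsmul_mem hdd0 _) (nsmul_mem mk_dd1_mem _))
    (nsmul_mem mk_dd2_mem _)) (nsmul_mem mk_dd3_mem _)

/-- `H/K ≅ (Z_2)^3` and `K` contains no nontrivial element of the
form `φ_k` or `φ_iφ_j`. -/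
theorem stmt_4 :
    Nonempty ((GFGroup 2 6 ⧸ K4) ≃+ (Fin 3 → ZMod 2)) ∧
    ∀ x ∈ K4, IsForbidden 2 6 2 x → x = 0 := by
  constructor
  · exact ⟨AddEquiv.ofBijective Gh ⟨Gh_inj, Gh_surj⟩⟩
  · rintro x hx ⟨s, l, hne, hcard, hl, rfl⟩
    set w : GFVec 2 6 := fun i => if i ∈ s then l i else 0 with hwdef
    have hF : Fh w = 0 := hK4ker _ hx
    have h0 := congrFun hF 0
    have h1 := congrFun hF 1
    have h2 := congrFun hF 2
    simp only [Fh_apply, Matrix.cons_val_zero, Matrix.cons_val_one, Matrix.head_cons,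
      Pi.zero_apply] at h0 h1 h2
    rcases keyker w h0 h1 h2 with hw0 | hbig
    · rw [hw0]
      exact rfl
    · exfalso
      have hfil : (Finset.univ.filter fun i => w i ≠ 0) = s := by
        ext i
        simp only [Finset.mem_filter, Finset.mem_univ, true_and, hwdef]
        constructor
        · intro h
          by_contra hs
          exact h (by simp [hs])
        · intro hs
          simpa [hs] using hl i hs
      rw [hfil] at hbig
      omega
end

section
/- For every n ≥ 5, there exists a subgroup K of H = (Z_2)^{n+1}/⟨(1,...,1)⟩ with H/K ≅ (Z_2)^{n-1} such that K contains no nontrivial element of the form φ_k or φ_iφ_j (1 ≤ i < j ≤ n+1). -/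
open scoped BigOperators

def vmap (n : ℕ) (k : Fin (n+1)) (j : Fin (n-1)) : ZMod 2 :=
  if (k:ℕ) = (j:ℕ) then 1
  else if (k:ℕ) = n - 1 ∧ (j:ℕ) < 2 then 1
  else if (k:ℕ) = n ∧ 2 ≤ (j:ℕ) then 1 else 0

lemma vmap_mk (n c : ℕ) (hc : c < n+1) (j : Fin (n-1)) :
    vmap n ⟨c, hc⟩ j = if c = (j:ℕ) then 1
      else if c = n - 1 ∧ (j:ℕ) < 2 then 1
      else if c = n ∧ 2 ≤ (j:ℕ) then 1 else 0 := rfl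

lemma vmap_eq_one (n : ℕ) (k : Fin (n+1)) (j : Fin (n-1))
    (h : (k:ℕ) = (j:ℕ) ∨ ((k:ℕ) = n - 1 ∧ (j:ℕ) < 2) ∨ ((k:ℕ) = n ∧ 2 ≤ (j:ℕ)))
    (hn : 5 ≤ n) : vmap n k j = 1 := by
  have hj : (j:ℕ) < n - 1 := j.isLt
  unfold vmap
  split_ifs with h1 h2 h3 <;> first | rfl | omega

lemma vmap_eq_zero (n : ℕ) (k : Fin (n+1)) (j : Fin (n-1))
    (h1 : (k:ℕ) ≠ (j:ℕ)) (h2 : ¬((k:ℕ) = n - 1 ∧ (j:ℕ) < 2))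
    (h3 : ¬((k:ℕ) = n ∧ 2 ≤ (j:ℕ))) : vmap n k j = 0 := by
  unfold vmap
  split_ifs <;> first | rfl | omega

def theta (n : ℕ) : GFVec 2 n →+ (Fin (n-1) → ZMod 2) where
  toFun f := fun j => ∑ k, f k * vmap n k j
  map_zero' := by funext j; simp
  map_add' f g := by funext j; simp [add_mul, Finset.sum_add_distrib]

lemma theta_ones (n : ℕ) (hn : 5 ≤ n) : theta n (fun _ => 1) = 0 := by
  funext j
  have hj : (j:ℕ) < n - 1 := j.isLt
  refine Eq.trans (b := ∑ k, vmap n k j) (by simp [theta]) ?_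
  set a : Fin (n+1) := ⟨j, by omega⟩ with ha
  set b : Fin (n+1) := ⟨if (j:ℕ) < 2 then n-1 else n, by split <;> omega⟩ with hb
  have hbv : (b:ℕ) = if (j:ℕ) < 2 then n-1 else n := rfl
  have hab : a ≠ b := by
    intro h
    have := congrArg Fin.val h
    rw [hbv] at this
    revert this; show (j:ℕ) = _ → False
    split <;> omega
  have key : ∑ k, vmap n k j = ∑ k ∈ ({a, b} : Finset (Fin (n+1))), vmap n k j := by
    refine (Finset.sum_subset (Finset.subset_univ _) ?_).symm
    intro k _ hk
    simp only [Finset.mem_insert, Finset.mem_singleton, not_or] at hk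
    obtain ⟨h1, h2⟩ := hk
    have h1' : (k:ℕ) ≠ (j:ℕ) := fun h => h1 (Fin.ext h)
    have h2' : (k:ℕ) ≠ (b:ℕ) := fun h => h2 (Fin.ext h)
    rw [hbv] at h2'
    refine vmap_eq_zero n k j ?_ ?_ ?_ <;> revert h2' <;> show ¬(k:ℕ) = _ → _ <;> split <;> omega
  rw [key, Finset.sum_pair hab]
  have hva : vmap n a j = 1 := vmap_eq_one n a j (Or.inl rfl) hn
  have hvb : vmap n b j = 1 := by
    refine vmap_eq_one n b j ?_ hn
    rw [hbv]; revert hbv; split <;> intro _ <;> [exact Or.inr (Or.inl ⟨rfl, by omega⟩); exact Or.inr (Or.inr ⟨rfl, by omega⟩)]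
  rw [hva, hvb]; show (1 + 1 : ZMod 2) = 0; decide

lemma theta_apply (n : ℕ) (f : GFVec 2 n) (j : Fin (n-1)) :
    theta n f j = ∑ k, f k * vmap n k j := rfl

lemma vmap_single (n : ℕ) (hn : 5 ≤ n) (a : Fin (n+1)) :
    ∃ j : Fin (n-1), vmap n a j = 1 := by
  have ha : (a:ℕ) < n + 1 := a.isLt
  rcases lt_trichotomy (a:ℕ) (n-1) with h | h | h
  · exact ⟨⟨a, h⟩, vmap_eq_one n a _ (Or.inl rfl) hn⟩
  · refine ⟨⟨0, by omega⟩, ?_⟩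
    have hjv : ((⟨0, by omega⟩ : Fin (n-1)):ℕ) = 0 := rfl
    exact vmap_eq_one n a _ (Or.inr (Or.inl ⟨by omega, by omega⟩)) hn
  · refine ⟨⟨2, by omega⟩, ?_⟩
    have hjv : ((⟨2, by omega⟩ : Fin (n-1)):ℕ) = 2 := rfl
    exact vmap_eq_one n a _ (Or.inr (Or.inr ⟨by omega, by omega⟩)) hn

lemma vmap_pair' (n : ℕ) (hn : 5 ≤ n) (a b : Fin (n+1)) (hab : (a:ℕ) < (b:ℕ)) :
    ∃ j : Fin (n-1), vmap n a j + vmap n b j = 1 := by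
  have hb : (b:ℕ) < n + 1 := b.isLt
  rcases lt_trichotomy (b:ℕ) (n-1) with h | h | h
  · refine ⟨⟨b, h⟩, ?_⟩
    have hjv : ((⟨(b:ℕ), h⟩ : Fin (n-1)):ℕ) = (b:ℕ) := rfl
    rw [vmap_eq_one n b _ (Or.inl rfl) hn,
        vmap_eq_zero n a _ (by omega) (by omega) (by omega)]
    decide
  · -- b = n-1, a < n-1
    refine ⟨⟨if (a:ℕ) = 0 then 1 else 0, by split <;> omega⟩, ?_⟩
    have hj : ((⟨if (a:ℕ) = 0 then 1 else 0, by split <;> omega⟩ : Fin (n-1)):ℕ)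
        = if (a:ℕ) = 0 then 1 else 0 := rfl
    have hj2 : ((⟨if (a:ℕ) = 0 then 1 else 0, by split <;> omega⟩ : Fin (n-1)):ℕ) < 2 := by
      rw [hj]; split <;> omega
    have hja : (a:ℕ) ≠ ((⟨if (a:ℕ) = 0 then 1 else 0, by split <;> omega⟩ : Fin (n-1)):ℕ) := by
      rw [hj]; split <;> omega
    rw [vmap_eq_one n b _ (Or.inr (Or.inl ⟨by omega, hj2⟩)) hn,
        vmap_eq_zero n a _ hja (by omega) (by omega)]
    decide
  · -- b = n
    have hbn : (b:ℕ) = n := by omega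
    rcases lt_or_ge (a:ℕ) (n-1) with h2 | h2
    · refine ⟨⟨if (a:ℕ) = 2 then 3 else 2, by split <;> omega⟩, ?_⟩
      have hj : ((⟨if (a:ℕ) = 2 then 3 else 2, by split <;> omega⟩ : Fin (n-1)):ℕ)
          = if (a:ℕ) = 2 then 3 else 2 := rfl
      have hj2 : 2 ≤ ((⟨if (a:ℕ) = 2 then 3 else 2, by split <;> omega⟩ : Fin (n-1)):ℕ) := by
        rw [hj]; split <;> omega
      have hja : (a:ℕ) ≠ ((⟨if (a:ℕ) = 2 then 3 else 2, by split <;> omega⟩ : Fin (n-1)):ℕ) := by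
        rw [hj]; split <;> omega
      rw [vmap_eq_one n b _ (Or.inr (Or.inr ⟨hbn, hj2⟩)) hn,
          vmap_eq_zero n a _ hja (by omega) (by omega)]
      decide
    · -- a = n-1, b = n
      have han : (a:ℕ) = n - 1 := by omega
      refine ⟨⟨0, by omega⟩, ?_⟩
      have hjv : ((⟨0, by omega⟩ : Fin (n-1)):ℕ) = 0 := rfl
      rw [vmap_eq_one n a _ (Or.inr (Or.inl ⟨han, by omega⟩)) hn,
          vmap_eq_zero n b _ (by omega) (by omega) (by omega)]
      decide

lemma vmap_pair (n : ℕ) (hn : 5 ≤ n) (a b : Fin (n+1)) (hab : a ≠ b) :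
    ∃ j : Fin (n-1), vmap n a j + vmap n b j = 1 := by
  rcases lt_or_gt_of_ne (fun h => hab (Fin.ext h) : (a:ℕ) ≠ (b:ℕ)) with h | h
  · exact vmap_pair' n hn a b h
  · obtain ⟨j, hj⟩ := vmap_pair' n hn b a h
    exact ⟨j, by rw [add_comm]; exact hj⟩

lemma theta_surj (n : ℕ) (hn : 5 ≤ n) : Function.Surjective (theta n) := by
  intro t
  refine ⟨fun k => if h : (k:ℕ) < n - 1 then t ⟨k, h⟩ else 0, ?_⟩
  funext j
  have hj : (j:ℕ) < n - 1 := j.isLt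
  rw [theta_apply]
  rw [Finset.sum_eq_single (⟨(j:ℕ), by omega⟩ : Fin (n+1))]
  · rw [dif_pos (show ((⟨(j:ℕ), by omega⟩ : Fin (n+1)):ℕ) < n - 1 from hj),
        vmap_eq_one n _ j (Or.inl rfl) hn, mul_one]
  · intro k _ hk
    have hk' : (k:ℕ) ≠ (j:ℕ) := fun h => hk (Fin.ext h)
    by_cases h : (k:ℕ) < n - 1
    · rw [dif_pos h, vmap_eq_zero n k j hk' (by omega) (by omega), mul_zero]
    · rw [dif_neg h, zero_mul]
  · intro h; exact absurd (Finset.mem_univ _) h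

theorem stmt_6_aux (n : ℕ) (hn : 5 ≤ n) :
    ∃ K : AddSubgroup (GFGroup 2 n),
      Nonempty ((GFGroup 2 n ⧸ K) ≃+ (Fin (n - 1) → ZMod 2)) ∧
      ∀ x ∈ K, (∃ (s : Finset (Fin (n + 1))) (l : Fin (n + 1) → ZMod 2),
        s.Nonempty ∧ s.card ≤ 2 ∧ (∀ i ∈ s, l i ≠ 0) ∧
        x = QuotientAddGroup.mk (fun i => if i ∈ s then l i else 0)) → x = 0 := by
  have hker : ∀ c ∈ diagSub 2 n, theta n c = 0 := by
    intro c hc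
    obtain ⟨m, hm⟩ := AddSubgroup.mem_zmultiples_iff.mp hc
    rw [← hm, map_zsmul, theta_ones n hn, smul_zero]
  set θbar := QuotientAddGroup.lift (diagSub 2 n) (theta n) hker with hθbar
  have hsurj : Function.Surjective θbar := by
    intro t
    obtain ⟨f, hf⟩ := theta_surj n hn t
    exact ⟨QuotientAddGroup.mk f, hf⟩
  refine ⟨θbar.ker, ⟨QuotientAddGroup.quotientKerEquivOfSurjective θbar hsurj⟩, ?_⟩
  intro x hx hforb
  obtain ⟨s, l, hne, hcard, hl, hxe⟩ := hforb
  exfalso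
  have hl1 : ∀ i ∈ s, l i = 1 := by
    have h2 : ∀ a : ZMod 2, a ≠ 0 → a = 1 := by decide
    exact fun i hi => h2 (l i) (hl i hi)
  have hθ : theta n (fun i => if i ∈ s then l i else 0) = 0 := by
    have h0 : θbar x = 0 := hx
    rw [hxe] at h0
    exact h0
  have hsum : ∀ j, ∑ k ∈ s, vmap n k j = 0 := by
    intro j
    have h1 := congrFun hθ j
    rw [theta_apply, Pi.zero_apply] at h1
    rw [← h1]
    rw [show (∑ k, (if k ∈ s then l k else 0) * vmap n k j)
        = ∑ k, (if k ∈ s then vmap n k j else 0) from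
      Finset.sum_congr rfl (fun k _ => by
        by_cases hk : k ∈ s
        · rw [if_pos hk, if_pos hk, hl1 k hk, one_mul]
        · rw [if_neg hk, if_neg hk, zero_mul])]
    rw [Finset.sum_ite_mem, Finset.univ_inter]
  have hc : s.card = 1 ∨ s.card = 2 := by
    have := Finset.Nonempty.card_pos hne
    omega
  rcases hc with hc | hc
  · obtain ⟨a, ha⟩ := Finset.card_eq_one.mp hc
    obtain ⟨j, hj⟩ := vmap_single n hn a
    have := hsum j
    rw [ha, Finset.sum_singleton, hj] at this
    exact one_ne_zero this
  · obtain ⟨a, b, hab, hs⟩ := Finset.card_eq_two.mp hc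
    obtain ⟨j, hj⟩ := vmap_pair n hn a b hab
    have := hsum j
    rw [hs, Finset.sum_pair hab, hj] at this
    exact one_ne_zero this

/-- for every `n ≥ 5` there is a subgroup `K` of `H = (Z_2)^{n+1}/⟨(1,…,1)⟩`
with `H/K ≅ (Z_2)^{n-1}` avoiding all nontrivial `φ_k` and `φ_iφ_j`. -/
theorem stmt_6 (n : ℕ) (hn : 5 ≤ n) :
    ∃ K : AddSubgroup (GFGroup 2 n),
      Nonempty ((GFGroup 2 n ⧸ K) ≃+ (Fin (n - 1) → ZMod 2)) ∧
      ∀ x ∈ K, IsForbidden 2 n 2 x → x = 0 := by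
  obtain ⟨K, hK1, hK2⟩ := stmt_6_aux n hn
  exact ⟨K, hK1, fun x hx hf => hK2 x hx hf⟩
end

section
/- For every n ≥ 6, there exists a subgroup K of H = (Z_2)^{n+1}/⟨(1,...,1)⟩ with H/K ≅ (Z_2)^{n-2} such that K contains no nontrivial element of the form φ_k or φ_iφ_j (1 ≤ i < j ≤ n+1). -/
open scoped BigOperators

/-! ### Auxiliary construction for the proof of `stmt_7`.

We realize the quotient map `θ : H → (Z_2)^{n-2}` concretely.  Writing `m = n - 2`,
the generator `φ_k` for `k < m` is sent to the standard basis vector `e_k`, while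
`φ_m`, `φ_{m+1}`, `φ_{m+2}` are sent to the indicator vectors of `[0, m-1)`,
`(0, m-1]` and `(0, m-1)` respectively.  These `m + 3` vectors sum to zero (so the
map kills the diagonal), and they are pairwise distinct and nonzero, which is
exactly the statement that the kernel avoids all forbidden elements of weight `≤ 2`. -/

/-- The underlying function of the quotient map on `(Z_2)^{n+1}`. -/
def Tfun (n : ℕ) (v : GFVec 2 n) : Fin (n - 2) → ZMod 2 := fun j =>
  v ⟨j.val, by have := j.isLt; omega⟩
  + (if j.val + 1 < n - 2 then v ⟨n - 2, by omega⟩ else 0)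
  + (if 0 < j.val then v ⟨n - 1, by omega⟩ else 0)
  + (if 0 < j.val ∧ j.val + 1 < n - 2 then v ⟨n, by omega⟩ else 0)

/-- `Tfun` as an additive group homomorphism. -/
def Tmap (n : ℕ) : GFVec 2 n →+ (Fin (n - 2) → ZMod 2) where
  toFun := Tfun n
  map_zero' := by funext j; simp [Tfun]
  map_add' v w := by
    funext j
    simp only [Tfun, Pi.add_apply]
    split_ifs <;> ring

lemma Tmap_one (n : ℕ) (hn : 6 ≤ n) : Tmap n (fun _ => 1) = 0 := by
  funext j
  have hj := j.isLt
  simp only [Tmap, AddMonoidHom.coe_mk, ZeroHom.coe_mk, Tfun, Pi.zero_apply]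
  split_ifs <;> first | (exfalso; omega) | decide

lemma Tmap_diag (n : ℕ) (hn : 6 ≤ n) : ∀ v ∈ diagSub 2 n, Tmap n v = 0 := by
  intro v hv
  obtain ⟨z, rfl⟩ := AddSubgroup.mem_zmultiples_iff.mp hv
  rw [map_zsmul, Tmap_one n hn, smul_zero]

/-- The induced homomorphism `H → (Z_2)^{n-2}`. -/
noncomputable def Tbar (n : ℕ) (hn : 6 ≤ n) : GFGroup 2 n →+ (Fin (n - 2) → ZMod 2) :=
  QuotientAddGroup.lift (diagSub 2 n) (Tmap n) (Tmap_diag n hn)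

lemma Tbar_mk (n : ℕ) (hn : 6 ≤ n) (v : GFVec 2 n) :
    Tbar n hn (QuotientAddGroup.mk v) = Tmap n v :=
  QuotientAddGroup.lift_mk (diagSub 2 n) _ v

lemma Tbar_surj (n : ℕ) (hn : 6 ≤ n) : Function.Surjective (Tbar n hn) := by
  intro w
  refine ⟨QuotientAddGroup.mk (fun k => if h : k.val < n - 2 then w ⟨k.val, h⟩ else 0), ?_⟩
  rw [Tbar_mk]
  funext j
  have hj := j.isLt
  simp only [Tmap, AddMonoidHom.coe_mk, ZeroHom.coe_mk, Tfun]
  split_ifs <;> first | omega | simp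

set_option maxHeartbeats 1000000 in
lemma key1 (n : ℕ) (hn : 6 ≤ n) (a : Fin (n + 1)) :
    Tmap n (fun i => if i ∈ ({a} : Finset (Fin (n + 1))) then 1 else 0) ≠ 0 := by
  intro h
  have ha := a.isLt
  rcases (show a.val < n - 2 ∨ a.val = n - 2 ∨ a.val = n - 1 ∨ a.val = n by omega) with
    ha' | ha' | ha' | ha'
  · have h0 := congrFun h ⟨a.val, by omega⟩
    simp only [Tmap, AddMonoidHom.coe_mk, ZeroHom.coe_mk, Tfun, Finset.mem_singleton,
      Pi.zero_apply, Fin.ext_iff, eq_self_iff_true, if_true] at h0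
    split_ifs at h0 <;> first | omega | exact absurd h0 (by decide)
  · have h0 := congrFun h ⟨0, by omega⟩
    simp only [Tmap, AddMonoidHom.coe_mk, ZeroHom.coe_mk, Tfun, Finset.mem_singleton,
      Pi.zero_apply, Fin.ext_iff, eq_self_iff_true, if_true] at h0
    split_ifs at h0 <;> first | omega | exact absurd h0 (by decide)
  · have h0 := congrFun h ⟨1, by omega⟩
    simp only [Tmap, AddMonoidHom.coe_mk, ZeroHom.coe_mk, Tfun, Finset.mem_singleton,
      Pi.zero_apply, Fin.ext_iff, eq_self_iff_true, if_true] at h0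
    split_ifs at h0 <;> first | omega | exact absurd h0 (by decide)
  · have h0 := congrFun h ⟨1, by omega⟩
    simp only [Tmap, AddMonoidHom.coe_mk, ZeroHom.coe_mk, Tfun, Finset.mem_singleton,
      Pi.zero_apply, Fin.ext_iff, eq_self_iff_true, if_true] at h0
    split_ifs at h0 <;> first | omega | exact absurd h0 (by decide)

set_option maxHeartbeats 1000000 in
lemma key2 (n : ℕ) (hn : 6 ≤ n) (a b : Fin (n + 1)) (hab : a.val < b.val) :
    Tmap n (fun i => if i ∈ ({a, b} : Finset (Fin (n + 1))) then 1 else 0) ≠ 0 := by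
  intro h
  have ha := a.isLt
  have hb := b.isLt
  rcases (show (a.val < n - 2 ∧ b.val < n - 2) ∨ (a.val < n - 2 ∧ b.val = n - 2)
      ∨ (a.val < n - 2 ∧ b.val = n - 1) ∨ (a.val < n - 2 ∧ b.val = n)
      ∨ (a.val = n - 2 ∧ b.val = n - 1) ∨ (a.val = n - 2 ∧ b.val = n)
      ∨ (a.val = n - 1 ∧ b.val = n) by omega) with
    ⟨ha', hb'⟩ | ⟨ha', hb'⟩ | ⟨ha', hb'⟩ | ⟨ha', hb'⟩ | ⟨ha', hb'⟩ | ⟨ha', hb'⟩ | ⟨ha', hb'⟩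
  · have h0 := congrFun h ⟨a.val, by omega⟩
    simp only [Tmap, AddMonoidHom.coe_mk, ZeroHom.coe_mk, Tfun, Finset.mem_insert,
      Finset.mem_singleton, Pi.zero_apply, Fin.ext_iff, eq_self_iff_true, true_or, or_true,
      if_true] at h0
    split_ifs at h0 <;> first | omega | exact absurd h0 (by decide)
  · rcases eq_or_ne a.val 1 with h1 | h1
    · have h0 := congrFun h ⟨2, by omega⟩
      simp only [Tmap, AddMonoidHom.coe_mk, ZeroHom.coe_mk, Tfun, Finset.mem_insert,
        Finset.mem_singleton, Pi.zero_apply, Fin.ext_iff, eq_self_iff_true, true_or, or_true,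
        if_true] at h0
      split_ifs at h0 <;> first | omega | exact absurd h0 (by decide)
    · have h0 := congrFun h ⟨1, by omega⟩
      simp only [Tmap, AddMonoidHom.coe_mk, ZeroHom.coe_mk, Tfun, Finset.mem_insert,
        Finset.mem_singleton, Pi.zero_apply, Fin.ext_iff, eq_self_iff_true, true_or, or_true,
        if_true] at h0
      split_ifs at h0 <;> first | omega | exact absurd h0 (by decide)
  · rcases eq_or_ne a.val 1 with h1 | h1
    · have h0 := congrFun h ⟨2, by omega⟩
      simp only [Tmap, AddMonoidHom.coe_mk, ZeroHom.coe_mk, Tfun, Finset.mem_insert,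
        Finset.mem_singleton, Pi.zero_apply, Fin.ext_iff, eq_self_iff_true, true_or, or_true,
        if_true] at h0
      split_ifs at h0 <;> first | omega | exact absurd h0 (by decide)
    · have h0 := congrFun h ⟨1, by omega⟩
      simp only [Tmap, AddMonoidHom.coe_mk, ZeroHom.coe_mk, Tfun, Finset.mem_insert,
        Finset.mem_singleton, Pi.zero_apply, Fin.ext_iff, eq_self_iff_true, true_or, or_true,
        if_true] at h0
      split_ifs at h0 <;> first | omega | exact absurd h0 (by decide)
  · rcases eq_or_ne a.val 1 with h1 | h1
    · have h0 := congrFun h ⟨2, by omega⟩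
      simp only [Tmap, AddMonoidHom.coe_mk, ZeroHom.coe_mk, Tfun, Finset.mem_insert,
        Finset.mem_singleton, Pi.zero_apply, Fin.ext_iff, eq_self_iff_true, true_or, or_true,
        if_true] at h0
      split_ifs at h0 <;> first | omega | exact absurd h0 (by decide)
    · have h0 := congrFun h ⟨1, by omega⟩
      simp only [Tmap, AddMonoidHom.coe_mk, ZeroHom.coe_mk, Tfun, Finset.mem_insert,
        Finset.mem_singleton, Pi.zero_apply, Fin.ext_iff, eq_self_iff_true, true_or, or_true,
        if_true] at h0
      split_ifs at h0 <;> first | omega | exact absurd h0 (by decide)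
  · have h0 := congrFun h ⟨0, by omega⟩
    simp only [Tmap, AddMonoidHom.coe_mk, ZeroHom.coe_mk, Tfun, Finset.mem_insert,
      Finset.mem_singleton, Pi.zero_apply, Fin.ext_iff, eq_self_iff_true, true_or, or_true,
      if_true] at h0
    split_ifs at h0 <;> first | omega | exact absurd h0 (by decide)
  · have h0 := congrFun h ⟨0, by omega⟩
    simp only [Tmap, AddMonoidHom.coe_mk, ZeroHom.coe_mk, Tfun, Finset.mem_insert,
      Finset.mem_singleton, Pi.zero_apply, Fin.ext_iff, eq_self_iff_true, true_or, or_true,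
      if_true] at h0
    split_ifs at h0 <;> first | omega | exact absurd h0 (by decide)
  · have h0 := congrFun h ⟨n - 3, by omega⟩
    simp only [Tmap, AddMonoidHom.coe_mk, ZeroHom.coe_mk, Tfun, Finset.mem_insert,
      Finset.mem_singleton, Pi.zero_apply, Fin.ext_iff, eq_self_iff_true, true_or, or_true,
      if_true] at h0
    split_ifs at h0 <;> first | omega | exact absurd h0 (by decide)

/-- for every `n ≥ 6` there is a subgroup `K` of `H = (Z_2)^{n+1}/⟨(1,…,1)⟩`
with `H/K ≅ (Z_2)^{n-2}` avoiding all nontrivial `φ_k` and `φ_iφ_j`. -/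
theorem stmt_7 (n : ℕ) (hn : 6 ≤ n) :
    ∃ K : AddSubgroup (GFGroup 2 n),
      Nonempty ((GFGroup 2 n ⧸ K) ≃+ (Fin (n - 2) → ZMod 2)) ∧
      ∀ x ∈ K, IsForbidden 2 n 2 x → x = 0 := by
  refine ⟨(Tbar n hn).ker,
    ⟨QuotientAddGroup.quotientKerEquivOfSurjective _ (Tbar_surj n hn)⟩, ?_⟩
  intro x hx hf
  exfalso
  obtain ⟨s, l, hne, hcard, hl, rfl⟩ := hf
  have hone : ∀ y : ZMod 2, y ≠ 0 → y = 1 := by decide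
  have hveq : (fun i => if i ∈ s then l i else 0)
      = (fun i => if i ∈ s then (1 : ZMod 2) else 0) := by
    funext i
    by_cases hi : i ∈ s
    · simp [hi, hone (l i) (hl i hi)]
    · simp [hi]
  rw [AddMonoidHom.mem_ker, hveq, Tbar_mk] at hx
  have hc1 : s.card = 1 ∨ s.card = 2 := by
    have := hne.card_pos; omega
  rcases hc1 with hc | hc
  · obtain ⟨a, rfl⟩ := Finset.card_eq_one.mp hc
    exact key1 n hn a hx
  · obtain ⟨a, b, hab, rfl⟩ := Finset.card_eq_two.mp hc
    have hvne : a.val ≠ b.val := fun h => hab (Fin.val_injective h)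
    rcases Nat.lt_or_ge a.val b.val with hlt | hge
    · exact key2 n hn a b hlt hx
    · rw [Finset.pair_comm] at hx
      exact key2 n hn b a (by omega) hx
end

section
/- For every even m ≥ 4, setting n = (m-1)(m+2)/2, there exists a subgroup K of H = (Z_2)^{n+1}/⟨(1,...,1)⟩ with H/K ≅ (Z_2)^m such that K contains no nontrivial element of the form φ_k or φ_iφ_j. -/
open scoped BigOperators


section aux
variable (m : ℕ)

/-- standard basis vector -/
def epsV (i : Fin m) : Fin m → ZMod 2 := Pi.single i 1

abbrev PairT (m : ℕ) := {p : Fin m × Fin m // p.1 < p.2}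

def uMap : Fin m ⊕ PairT m → (Fin m → ZMod 2) :=
  Sum.elim (fun i => epsV m i) (fun p => epsV m p.1.1 + epsV m p.1.2)

lemma epsV_apply (i t : Fin m) : epsV m i t = if t = i then 1 else 0 :=
  Pi.single_apply i 1 t

lemma uMap_ne_zero (x : Fin m ⊕ PairT m) : uMap m x ≠ 0 := by
  rcases x with t | ⟨⟨i, j⟩, hij⟩
  · intro h
    have h0 := congrFun h t
    rw [uMap, Sum.elim_inl, epsV_apply, if_pos rfl, Pi.zero_apply] at h0
    exact absurd h0 (by decide)
  · intro h
    have hne : i ≠ j := ne_of_lt hij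
    have h0 := congrFun h i
    rw [uMap, Sum.elim_inr, Pi.add_apply, epsV_apply, epsV_apply, if_pos rfl,
      if_neg hne, Pi.zero_apply] at h0
    exact absurd h0 (by decide)

lemma uMap_inj : Function.Injective (uMap m) := by
  intro x y h
  rcases x with a | ⟨⟨i, j⟩, hij⟩ <;> rcases y with b | ⟨⟨i', j'⟩, hij'⟩
  · have h0 := congrFun h b
    rw [uMap, Sum.elim_inl, Sum.elim_inl, epsV_apply, epsV_apply, if_pos rfl] at h0
    by_cases hab : b = a
    · exact congrArg Sum.inl hab.symm
    · rw [if_neg hab] at h0; exact absurd h0 (by decide)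
  · exfalso
    have hne : i' ≠ j' := ne_of_lt hij'
    have hi : i' = a := by
      by_contra hia
      have h0 := congrFun h i'
      rw [uMap, Sum.elim_inl, Sum.elim_inr, Pi.add_apply, epsV_apply, epsV_apply, epsV_apply,
        if_pos rfl, if_neg hne, if_neg hia, add_zero] at h0
      exact absurd h0 (by decide)
    have hj : j' = a := by
      by_contra hja
      have h0 := congrFun h j'
      rw [uMap, Sum.elim_inl, Sum.elim_inr, Pi.add_apply, epsV_apply, epsV_apply, epsV_apply,
        if_pos rfl, if_neg (Ne.symm hne), if_neg hja, zero_add] at h0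
      exact absurd h0 (by decide)
    exact hne (hi.trans hj.symm)
  · exfalso
    have hne : i ≠ j := ne_of_lt hij
    have hi : i = b := by
      by_contra hib
      have h0 := congrFun h i
      rw [uMap, Sum.elim_inl, Sum.elim_inr, Pi.add_apply, epsV_apply, epsV_apply, epsV_apply,
        if_pos rfl, if_neg hne, if_neg hib, add_zero] at h0
      exact absurd h0 (by decide)
    have hj : j = b := by
      by_contra hjb
      have h0 := congrFun h j
      rw [uMap, Sum.elim_inl, Sum.elim_inr, Pi.add_apply, epsV_apply, epsV_apply, epsV_apply,
        if_pos rfl, if_neg (Ne.symm hne), if_neg hjb, zero_add] at h0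
      exact absurd h0 (by decide)
    exact hne (hi.trans hj.symm)
  · have hne : i ≠ j := ne_of_lt hij
    have hne' : i' ≠ j' := ne_of_lt hij'
    have ev : ∀ t : Fin m, ((if t = i then 1 else 0) + (if t = j then 1 else 0) : ZMod 2)
        = (if t = i' then 1 else 0) + (if t = j' then 1 else 0) := by
      intro t
      have h0 := congrFun h t
      rw [uMap, Sum.elim_inr, Sum.elim_inr, Pi.add_apply, Pi.add_apply,
        epsV_apply, epsV_apply, epsV_apply, epsV_apply] at h0
      exact h0
    have hii : i = i' := by
      by_contra hii
      by_cases hij2 : i = j'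
      · have hlt : i' < i := hij2 ▸ hij'
        have e1 := ev i'
        rw [if_neg (fun hh => hii hh.symm), if_neg (ne_of_lt (lt_trans hlt hij)),
          if_pos rfl, if_neg hne'] at e1
        exact absurd e1 (by decide)
      · have e1 := ev i
        rw [if_pos rfl, if_neg hne, if_neg hii, if_neg hij2] at e1
        exact absurd e1 (by decide)
    subst hii
    have hjj' : epsV m j = epsV m j' := by
      have h0 : epsV m i + epsV m j = epsV m i + epsV m j' := h
      exact add_left_cancel h0
    have e2 := congrFun hjj' j
    rw [epsV_apply, epsV_apply, if_pos rfl] at e2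
    by_cases hjj : j = j'
    · subst hjj; rfl
    · rw [if_neg hjj] at e2; exact absurd e2 (by decide)

lemma card_pairT_mul_two : Fintype.card (PairT m) * 2 = m * (m - 1) := by
  have e2 := Equiv.subtypeProdEquivSigmaSubtype (fun a b : Fin m => a < b)
  rw [Fintype.card_congr e2, Fintype.card_sigma]
  have hcard : ∀ i : Fin m, Fintype.card {j : Fin m // i < j} = m - 1 - i := by
    intro i
    rw [Fintype.card_subtype]
    have : Finset.filter (fun j => i < j) Finset.univ = Finset.Ioi i := by
      ext j; simp
    rw [this, Fin.card_Ioi]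
  simp only [hcard]
  rw [Fin.sum_univ_eq_sum_range (fun i => m - 1 - i) m,
    Finset.sum_range_reflect (fun i => i) m, Finset.sum_range_id_mul_two]

lemma sum_uMap_eq_zero (heven : Even m) : ∑ x : Fin m ⊕ PairT m, uMap m x = 0 := by
  classical
  rw [Fintype.sum_sum_type]
  have hP : (∑ p : PairT m, uMap m (Sum.inr p))
      = ∑ p ∈ Finset.univ.filter (fun p : Fin m × Fin m => p.1 < p.2),
          (epsV m p.1 + epsV m p.2) := by
    exact (Finset.sum_subtype (Finset.univ.filter fun p : Fin m × Fin m => p.1 < p.2)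
      (fun x => by simp) (fun p => epsV m p.1 + epsV m p.2)).symm
  have hA : ∑ p ∈ Finset.univ.filter (fun p : Fin m × Fin m => p.1 < p.2), epsV m p.1
      = ∑ i : Fin m, (m - 1 - (i : ℕ)) • epsV m i := by
    rw [Finset.sum_filter, ← Finset.univ_product_univ, Finset.sum_product]
    refine Finset.sum_congr rfl fun i _ => ?_
    dsimp only
    rw [← Finset.sum_filter, Finset.sum_const]
    congr 1
    rw [show Finset.filter (fun j => (i, j).1 < (i, j).2) Finset.univ = Finset.Ioi i from by
      ext j; simp, Fin.card_Ioi]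
  have hB : ∑ p ∈ Finset.univ.filter (fun p : Fin m × Fin m => p.1 < p.2), epsV m p.2
      = ∑ j : Fin m, (j : ℕ) • epsV m j := by
    rw [Finset.sum_filter, ← Finset.univ_product_univ, Finset.sum_product_right]
    refine Finset.sum_congr rfl fun j _ => ?_
    dsimp only
    rw [← Finset.sum_filter, Finset.sum_const]
    congr 1
    rw [show Finset.filter (fun i => (i, j).1 < (i, j).2) Finset.univ = Finset.Iio j from by
      ext i; simp, Fin.card_Iio]
  rw [hP, Finset.sum_add_distrib, hA, hB, ← Finset.sum_add_distrib, ← Finset.sum_add_distrib]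
  refine Finset.sum_eq_zero fun t _ => ?_
  have h1 : 1 + ((m - 1 - (t : ℕ)) + (t : ℕ)) = m := by have := t.isLt; omega
  have h2 : uMap m (Sum.inl t) + ((m - 1 - (t : ℕ)) • epsV m t + (t : ℕ) • epsV m t)
      = (1 + ((m - 1 - (t : ℕ)) + (t : ℕ))) • epsV m t := by
    rw [add_nsmul, add_nsmul, one_nsmul]; rfl
  rw [h2, h1, ← Nat.cast_smul_eq_nsmul (ZMod 2),
    (ZMod.natCast_eq_zero_iff m 2).2 heven.two_dvd, zero_smul]

end aux

/-- for every even `m ≥ 4`, with `n = (m-1)(m+2)/2`, there is a subgroup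
`K` of `H = (Z_2)^{n+1}/⟨(1,…,1)⟩` with `H/K ≅ (Z_2)^m` avoiding all nontrivial
`φ_k` and `φ_iφ_j`. -/
theorem stmt_8 (m n : ℕ) (hm : 4 ≤ m) (heven : Even m)
    (hn : 2 * n = (m - 1) * (m + 2)) :
    ∃ K : AddSubgroup (GFGroup 2 n),
      Nonempty ((GFGroup 2 n ⧸ K) ≃+ (Fin m → ZMod 2)) ∧
      ∀ x ∈ K, IsForbidden 2 n 2 x → x = 0 := by
  classical
  -- cardinality equivalence
  have hc2 := card_pairT_mul_two m
  have hcardeq : Fintype.card (Fin (n + 1)) = Fintype.card (Fin m ⊕ PairT m) := by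
    rw [Fintype.card_fin, Fintype.card_sum, Fintype.card_fin]
    obtain ⟨k, rfl⟩ : ∃ k, m = k + 4 := ⟨m - 4, by omega⟩
    have h1 : (k + 4 - 1) * (k + 4 + 2) = k * k + 9 * k + 18 := by
      have : k + 4 - 1 = k + 3 := rfl
      rw [this]; ring
    have h2 : (k + 4) * (k + 4 - 1) = k * k + 7 * k + 12 := by
      have : k + 4 - 1 = k + 3 := rfl
      rw [this]; ring
    rw [h1] at hn
    rw [h2] at hc2
    generalize k * k = K at hn hc2
    omega
  let e : Fin (n + 1) ≃ (Fin m ⊕ PairT m) := Fintype.equivOfCardEq hcardeq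
  set v : Fin (n + 1) → (Fin m → ZMod 2) := fun k => uMap m (e k) with hv
  have hvinj : Function.Injective v := (uMap_inj m).comp e.injective
  have hvne : ∀ k, v k ≠ 0 := fun k => uMap_ne_zero m (e k)
  -- the linear map θ
  let f : GFVec 2 n →+ (Fin m → ZMod 2) :=
  { toFun := fun w => ∑ k, w k • v k
    map_zero' := by simp
    map_add' := fun a b => by
      simp only [Pi.add_apply, add_smul]
      exact Finset.sum_add_distrib }
  have hsumv : ∑ k, v k = 0 := by
    rw [hv, Equiv.sum_comp e (uMap m)]
    exact sum_uMap_eq_zero m heven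
  have hf : ∀ x ∈ diagSub 2 n, f x = 0 := by
    intro x hx
    obtain ⟨z, hz⟩ := AddSubgroup.mem_zmultiples_iff.mp hx
    rw [← hz, map_zsmul]
    have hones : f (fun _ => (1 : ZMod 2)) = 0 := by
      show ∑ k, (1 : ZMod 2) • v k = 0
      simp only [one_smul]
      exact hsumv
    rw [hones, smul_zero]
  let φ : GFGroup 2 n →+ (Fin m → ZMod 2) := QuotientAddGroup.lift (diagSub 2 n) f hf
  have hφmk : ∀ w : GFVec 2 n, φ (QuotientAddGroup.mk w) = f w := fun w => rfl
  have hsum_eps : ∀ y : Fin m → ZMod 2, ∑ t, y t • epsV m t = y := by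
    intro y
    funext t'
    simp only [Finset.sum_apply, Pi.smul_apply, epsV_apply, smul_eq_mul, mul_ite, mul_one,
      mul_zero]
    rw [Finset.sum_ite_eq Finset.univ t' y, if_pos (Finset.mem_univ t')]
  have hsurj : Function.Surjective φ := by
    intro y
    refine ⟨QuotientAddGroup.mk (fun k => Sum.elim y (fun _ => 0) (e k)), ?_⟩
    rw [hφmk]
    show ∑ k, Sum.elim y (fun _ => 0) (e k) • uMap m (e k) = y
    rw [Equiv.sum_comp e (fun x => Sum.elim y (fun _ => 0) x • uMap m x), Fintype.sum_sum_type]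
    simp only [Sum.elim_inl, Sum.elim_inr, zero_smul, Finset.sum_const_zero, add_zero]
    exact hsum_eps y
  refine ⟨φ.ker, ⟨QuotientAddGroup.quotientKerEquivOfSurjective φ hsurj⟩, ?_⟩
  intro x hxK hforb
  exfalso
  obtain ⟨s, l, hsne, hcard, hl, hx⟩ := hforb
  have hl1 : ∀ i ∈ s, l i = 1 := fun i hi =>
    (show ∀ a : ZMod 2, a ≠ 0 → a = 1 by decide) _ (hl i hi)
  have hφ0 : φ x = 0 := AddMonoidHom.mem_ker.mp hxK
  rw [hx, hφmk] at hφ0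
  have hfw : f (fun i => if i ∈ s then l i else 0) = ∑ i ∈ s, v i := by
    show ∑ k, (if k ∈ s then l k else 0) • v k = _
    calc ∑ k, (if k ∈ s then l k else 0) • v k
        = ∑ k, (if k ∈ s then l k • v k else 0) := by
          refine Finset.sum_congr rfl fun k _ => ?_
          split_ifs <;> simp
      _ = ∑ k ∈ s, l k • v k := by rw [Finset.sum_ite_mem, Finset.univ_inter]
      _ = ∑ k ∈ s, v k := Finset.sum_congr rfl fun k hk => by rw [hl1 k hk, one_smul]
  rw [hfw] at hφ0
  have hcpos : 1 ≤ s.card := hsne.card_pos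
  have : s.card = 1 ∨ s.card = 2 := by omega
  rcases this with h1 | h2
  · obtain ⟨a, rfl⟩ := Finset.card_eq_one.mp h1
    rw [Finset.sum_singleton] at hφ0
    exact hvne a hφ0
  · obtain ⟨a, b, hab, rfl⟩ := Finset.card_eq_two.mp h2
    rw [Finset.sum_pair hab] at hφ0
    have hbb : v b + v b = 0 := by
      funext t
      exact (show ∀ z : ZMod 2, z + z = 0 by decide) _
    have hvv : v a = v b := by
      calc v a = v a + (v b + v b) := by rw [hbb, add_zero]
        _ = (v a + v b) + v b := by rw [add_assoc]
        _ = v b := by rw [hφ0, zero_add]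
    exact hab (hvinj hvv)
end
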